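/- For all integers g ≥ 1 and natural numbers m, n, the eigenspace V₂^{(g,m,n)} := {f ∈ V₁^{(g,m,n)} : ι(f) = (−1)^{g−1} f} equals V₊^{(g,m,n)} when n + g is odd, and equals V₋^{(g,m,n)} when n + g is even. -/

import Mathlib

open MvPolynomial

set_option synthInstance.maxHeartbeats 1000000
set_option maxHeartbeats 2000000
noncomputable section

/-- `K = ℂ(z₁,z₂)`, the field of rational functions in two variables over `ℂ`. -/
abbrev K2 : Type := FractionRing (MvPolynomial (Fin 2) ℂ)

/-- The rational function `z₁`. -/
def z1 : K2 := algebraMap (MvPolynomial (Fin 2) ℂ) K2 (X 0)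

/-- The rational function `z₂`. -/
def z2 : K2 := algebraMap (MvPolynomial (Fin 2) ℂ) K2 (X 1)

/-- The conifold discriminant `Δ₁ = (1−432z₁)³ − 27·(432z₁)³·z₂`. -/
def Δ1 : K2 := (1 - 432 * z1) ^ 3 - 27 * (432 * z1) ^ 3 * z2

/-- The conifold discriminant `Δ₂ = 1 + 27z₂`. -/
def Δ2 : K2 := 1 + 27 * z2

/-- `V₀^{(g,m,n)}`: the ℂ-span of `z₁^k (1/432−z₁)^{m−k} z₂^n (Δ₁Δ₂)^{−(2g−2)}` for `0 ≤ k ≤ m`. -/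
def V0 (g : ℤ) (m n : ℕ) : Submodule ℂ K2 :=
  Submodule.span ℂ
    {f : K2 | ∃ k : ℕ, k ≤ m ∧
      f = z1 ^ k * (1 / 432 - z1) ^ (m - k) * z2 ^ n * (Δ1 * Δ2) ^ (-(2 * g - 2))}

/-- `V₁^{(g,m,n)} = {f ∈ V₀^{(g,m,n)} : ι(f) ∈ V₀^{(g,m,n)}}`. -/
def V1 (ι : K2 →ₐ[ℂ] K2) (g : ℤ) (m n : ℕ) : Submodule ℂ K2 :=
  V0 g m n ⊓ (V0 g m n).comap ι.toLinearMap

/-- `V₂^{(g,m,n)} = {f ∈ V₁^{(g,m,n)} : ι(f) = (−1)^{g−1} f}`. -/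
def V2 (ι : K2 →ₐ[ℂ] K2) (g : ℤ) (m n : ℕ) : Submodule ℂ K2 :=
  V1 ι g m n ⊓
    LinearMap.ker (ι.toLinearMap - ((-1 : ℂ) ^ (g - 1)) • (LinearMap.id : K2 →ₗ[ℂ] K2))

/-- `V₊^{(g,m,n)}`: the ℂ-span of `z₁^{k₁}(1/432−z₁)^{k₂} z₂^n (Δ₁Δ₂)^{−(2g−2)}`
over all `k₁, k₂ ≥ 0` with `k₁+k₂ ≤ m` and `k₁−k₂ = 3n−6g+6`. -/
def Vplus (g : ℤ) (m n : ℕ) : Submodule ℂ K2 :=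
  Submodule.span ℂ
    {f : K2 | ∃ k₁ k₂ : ℕ, k₁ + k₂ ≤ m ∧ (k₁ : ℤ) - k₂ = 3 * n - 6 * g + 6 ∧
      f = z1 ^ k₁ * (1 / 432 - z1) ^ k₂ * z2 ^ n * (Δ1 * Δ2) ^ (-(2 * g - 2))}

/-- `V₋^{(g,m,n)}`: the ℂ-span of `(1/432−2z₁)·z₁^{k₁}(1/432−z₁)^{k₂} z₂^n (Δ₁Δ₂)^{−(2g−2)}`
over all `k₁, k₂ ≥ 0` with `k₁+k₂ ≤ m−1` and `k₁−k₂ = 3n−6g+6`. -/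
def Vminus (g : ℤ) (m n : ℕ) : Submodule ℂ K2 :=
  Submodule.span ℂ
    {f : K2 | ∃ k₁ k₂ : ℕ, k₁ + k₂ + 1 ≤ m ∧ (k₁ : ℤ) - k₂ = 3 * n - 6 * g + 6 ∧
      f = (1 / 432 - 2 * z1) * z1 ^ k₁ * (1 / 432 - z1) ^ k₂ * z2 ^ n *
            (Δ1 * Δ2) ^ (-(2 * g - 2))}

-- auxiliary defs
def wz : K2 := 1 / 432 - z1

instance : CharZero K2 :=
  charZero_of_injective_algebraMap
    (IsFractionRing.injective (MvPolynomial (Fin 2) ℂ) K2)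

lemma inj2 : Function.Injective (algebraMap (MvPolynomial (Fin 2) ℂ) K2) :=
  IsFractionRing.injective _ _

lemma c432 : (432 : K2) ≠ 0 := by norm_num

lemma z1_ne : z1 ≠ 0 := by
  simp only [z1, ne_eq, map_eq_zero_iff _ inj2]
  exact X_ne_zero 0

lemma z2_ne : z2 ≠ 0 := by
  simp only [z2, ne_eq, map_eq_zero_iff _ inj2]
  exact X_ne_zero 1

lemma wz_ne : wz ≠ 0 := by
  have : wz = algebraMap (MvPolynomial (Fin 2) ℂ) K2 (C (1/432) - X 0) := by
    rw [wz, map_sub, ← MvPolynomial.algebraMap_eq,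
      ← IsScalarTower.algebraMap_apply ℂ (MvPolynomial (Fin 2) ℂ) K2, z1, map_div₀, map_one, map_ofNat]
  rw [this, ne_eq, map_eq_zero_iff _ inj2]
  intro h
  have := congrArg (MvPolynomial.coeff 0) h
  rw [coeff_sub, coeff_C, coeff_X', coeff_zero] at this
  norm_num at this

lemma z1_wz : z1 + wz = 1 / 432 := by rw [wz]; ring

lemma smulC (a : ℂ) (x : K2) : a • x = algebraMap ℂ K2 a * x := Algebra.smul_def a x

lemma Δ1_ne : Δ1 ≠ 0 := by
  have : Δ1 = algebraMap (MvPolynomial (Fin 2) ℂ) K2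
      ((1 - 432 * X 0) ^ 3 - 27 * (432 * X 0) ^ 3 * X 1) := by
    simp only [Δ1, z1, z2, map_sub, map_pow, map_mul, map_ofNat, map_one]
  rw [this, ne_eq, map_eq_zero_iff _ inj2]
  intro h
  have := congrArg (fun p => constantCoeff p) h
  simp only [map_sub, map_add, map_pow, map_mul, map_one, map_ofNat, constantCoeff_X,
    map_zero] at this
  norm_num at this

lemma Δ2_ne : Δ2 ≠ 0 := by
  have : Δ2 = algebraMap (MvPolynomial (Fin 2) ℂ) K2 (1 + 27 * X 1) := by
    simp only [Δ2, z2, map_add, map_mul, map_ofNat, map_one]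
  rw [this, ne_eq, map_eq_zero_iff _ inj2]
  intro h
  have := congrArg (fun p => constantCoeff p) h
  simp only [map_sub, map_add, map_pow, map_mul, map_one, map_ofNat, constantCoeff_X,
    map_zero] at this
  norm_num at this

lemma trans_z1 : Transcendental ℂ z1 := by
  rw [z1, transcendental_algebraMap_iff inj2]
  exact MvPolynomial.transcendental_X ℂ 0

def tK : K2 := z1 * wz⁻¹

lemma tK_ne : tK ≠ 0 := mul_ne_zero z1_ne (inv_ne_zero wz_ne)

lemma one_add_tK_mul : ((1 : K2) + tK) * wz = 1 / 432 := by
  have : ((1 : K2) + tK) * wz = wz + z1 * (wz⁻¹ * wz) := by rw [tK]; ring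
  rw [this, inv_mul_cancel₀ wz_ne, mul_one, wz]; ring

lemma one_add_tK_ne : (1 : K2) + tK ≠ 0 := by
  intro h
  have := one_add_tK_mul
  rw [h, zero_mul] at this
  norm_num at this

lemma trans_tK : Transcendental ℂ tK := by
  intro halg
  apply trans_z1
  have h1t : IsAlgebraic ℂ ((1 : K2) + tK) :=
    (isIntegral_one.add halg.isIntegral).isAlgebraic
  have hinv : IsAlgebraic ℂ (((1 : K2) + tK)⁻¹) := h1t.inv
  have h1 : (1 : K2) + tK = 1 / 432 * wz⁻¹ :=
    (eq_mul_inv_iff_mul_eq₀ wz_ne).mpr one_add_tK_mul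
  have key : tK * ((1 : K2) + tK)⁻¹ = 432 * z1 := by
    rw [h1, tK]
    field_simp
    rw [mul_div_assoc, div_self wz_ne, mul_one]
  have hz : z1 = algebraMap ℂ K2 (1 / 432) * (tK * ((1 : K2) + tK)⁻¹) := by
    rw [key, map_div₀, map_one, map_ofNat]
    have h432 : (1 / 432 : K2) * 432 = 1 := by norm_num
    calc z1 = ((1 / 432 : K2) * 432) * z1 := by rw [h432, one_mul]
    _ = 1 / 432 * (432 * z1) := by ring
  rw [hz]
  exact ((isAlgebraic_algebraMap ((1:ℂ)/432)).isIntegral.mul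
    ((halg.isIntegral.mul hinv.isIntegral))).isAlgebraic

lemma linIndep_pow_nat {x : K2} (hx : Transcendental ℂ x) :
    LinearIndependent ℂ (fun k : ℕ => x ^ k) := by
  rw [linearIndependent_iff']
  intro s gc hrel i hi
  classical
  set p : Polynomial ℂ := ∑ j ∈ s, Polynomial.C (gc j) * Polynomial.X ^ j with hp
  have hev : Polynomial.aeval x p = ∑ j ∈ s, gc j • x ^ j := by
    rw [hp, map_sum]
    refine Finset.sum_congr rfl fun j _ => ?_
    rw [map_mul, Polynomial.aeval_C, map_pow, Polynomial.aeval_X]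
    exact (Algebra.smul_def _ _).symm
  have hp0 : p = 0 := (transcendental_iff.1 hx) p (by rw [hev, hrel])
  have hc := congrArg (fun q => Polynomial.coeff q i) hp0
  simp only [hp, Polynomial.finset_sum_coeff, Polynomial.coeff_C_mul,
    Polynomial.coeff_X_pow, Polynomial.coeff_zero, mul_ite, mul_one, mul_zero] at hc
  rwa [Finset.sum_ite_eq s i gc, if_pos hi] at hc

lemma linIndep_zpow {x : K2} (hx : Transcendental ℂ x) (hx0 : x ≠ 0) :
    LinearIndependent ℂ (fun j : ℤ => x ^ j) := by
  rw [linearIndependent_iff']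
  intro s gc hrel i hi
  classical
  set N : ℕ := s.sup (fun j => (-j).toNat) with hN
  have hNj : ∀ j ∈ s, 0 ≤ j + N := by
    intro j hj
    have : (-j).toNat ≤ N := Finset.le_sup (f := fun j => (-j).toNat) hj
    omega
  set G : ℕ → ℂ := fun k => if ((k : ℤ) - N) ∈ s then gc ((k : ℤ) - N) else 0 with hG
  have hinj : Set.InjOn (fun j : ℤ => (j + N).toNat) s := by
    intro a ha b hb hab
    have ha' := hNj a ha; have hb' := hNj b hb
    simp only at hab
    omega
  have hsum : ∑ k ∈ s.image (fun j : ℤ => (j + N).toNat), G k • x ^ k = 0 := by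
    rw [Finset.sum_image hinj]
    have : ∀ j ∈ s, G ((j + N).toNat) • x ^ ((j + N).toNat) = (gc j • x ^ j) * x ^ (N : ℕ) := by
      intro j hj
      have h0 : ((j + N).toNat : ℤ) = j + N := Int.toNat_of_nonneg (hNj j hj)
      have hGj : G ((j + N).toNat) = gc j := by
        rw [hG]; simp only [h0, add_sub_cancel_right, if_pos hj]
      have hxp : x ^ ((j + N).toNat) = x ^ j * x ^ (N : ℕ) := by
        rw [← zpow_natCast x ((j + N).toNat), h0, zpow_add₀ hx0, zpow_natCast]
      rw [hGj, hxp, smul_mul_assoc]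
    rw [Finset.sum_congr rfl this, ← Finset.sum_mul, hrel, zero_mul]
  have := linearIndependent_iff'.1 (linIndep_pow_nat hx)
    (s.image (fun j : ℤ => (j + N).toNat)) G hsum ((i + N).toNat)
    (Finset.mem_image_of_mem _ hi)
  have h0 : ((i + N).toNat : ℤ) = i + N := Int.toNat_of_nonneg (hNj i hi)
  rw [hG] at this
  simp only [h0, add_sub_cancel_right, if_pos hi] at this
  exact this

def DD (g : ℤ) : K2 := (Δ1 * Δ2) ^ (-(2 * g - 2))

lemma DD_ne (g : ℤ) : DD g ≠ 0 := zpow_ne_zero _ (mul_ne_zero Δ1_ne Δ2_ne)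

def EE (g : ℤ) (m n : ℕ) (j : ℤ) : K2 := z1 ^ j * wz ^ ((m : ℤ) - j) * z2 ^ n * DD g

lemma EE_eq (g : ℤ) (m n : ℕ) (j : ℤ) :
    EE g m n j = tK ^ j * (wz ^ (m : ℤ) * z2 ^ n * DD g) := by
  rw [EE, tK, mul_zpow, inv_zpow, ← zpow_neg,
    show (m : ℤ) - j = -j + m by ring, zpow_add₀ wz_ne]
  ring

lemma linIndep_EE (g : ℤ) (m n : ℕ) : LinearIndependent ℂ (EE g m n) := by
  have hc : (wz ^ (m : ℤ) * z2 ^ n * DD g) ≠ 0 :=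
    mul_ne_zero (mul_ne_zero (zpow_ne_zero _ wz_ne) (pow_ne_zero _ z2_ne)) (DD_ne g)
  have hker : LinearMap.ker (LinearMap.mulRight ℂ (wz ^ (m : ℤ) * z2 ^ n * DD g)) = ⊥ := by
    rw [LinearMap.ker_eq_bot]
    intro a b hab
    simp only [LinearMap.mulRight_apply] at hab
    exact mul_right_cancel₀ hc hab
  have heq : EE g m n =
      (LinearMap.mulRight ℂ (wz ^ (m : ℤ) * z2 ^ n * DD g)) ∘ (fun j : ℤ => tK ^ j) :=
    funext fun j => by
      simp only [Function.comp_apply, LinearMap.mulRight_apply]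
      rw [EE_eq]
  rw [heq]
  exact (linIndep_zpow trans_tK tK_ne).map' _ hker

lemma one_sub_432z1 : (1 : K2) - 432 * z1 = 432 * wz := by rw [wz]; ring

lemma one_sub_432wz : (1 : K2) - 432 * wz = 432 * z1 := by rw [wz]; ring

lemma Δ1_wz : Δ1 = (432 : K2) ^ 3 * (wz ^ 3 - 27 * z1 ^ 3 * z2) := by
  rw [Δ1, one_sub_432z1]; ring

section iota
variable (ι : K2 →ₐ[ℂ] K2)
    (h1 : ι z1 = 1 / 432 - z1)
    (h2 : ι z2 = -((432 * z1) ^ 3 * z2) / (1 - 432 * z1) ^ 3)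

include h1 in
lemma iota_z1 : ι z1 = wz := by rw [h1, wz]

include h1 in
lemma iota_wz : ι wz = z1 := by
  rw [wz, map_sub, h1]
  have : ι (1 / 432 : K2) = 1 / 432 := by rw [map_div₀, map_one, map_ofNat]
  rw [this]; ring

include h2 in
lemma iota_z2' : ι z2 = -(z1 ^ (3:ℕ) * z2) * (wz ^ (3:ℕ))⁻¹ := by
  rw [h2, one_sub_432z1]
  have h4 : ((432 : K2) * wz) ^ 3 ≠ 0 := pow_ne_zero _ (mul_ne_zero c432 wz_ne)
  have hwz3 : wz ^ 3 * wz⁻¹ ^ 3 = 1 := by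
    rw [← mul_pow, mul_inv_cancel₀ wz_ne, one_pow]
  field_simp

include h1 h2 in
lemma iota_Δ1 : ι Δ1 = (432 : K2) ^ 3 * z1 ^ 3 * Δ2 := by
  rw [Δ1, Δ2, map_sub, map_pow, map_sub, map_one, map_mul, map_ofNat, map_mul, map_mul,
    map_pow, map_mul, map_ofNat, map_ofNat, iota_z1 ι h1, iota_z2' ι h2, one_sub_432wz]
  have hwz3 : wz ^ 3 * wz⁻¹ ^ 3 = 1 := by
    rw [← mul_pow, mul_inv_cancel₀ wz_ne, one_pow]
  field_simp
  linear_combination (z1 ^ 3 * z2 * 27) * (mul_inv_cancel₀ wz_ne)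

include h2 in
lemma iota_Δ2 : ι Δ2 = Δ1 * (((432 : K2) * wz) ^ 3)⁻¹ := by
  rw [Δ2, map_add, map_one, map_mul, map_ofNat, iota_z2' ι h2, Δ1_wz]
  have hwz3 : wz ^ 3 * wz⁻¹ ^ 3 = 1 := by
    rw [← mul_pow, mul_inv_cancel₀ wz_ne, one_pow]
  field_simp
  linear_combination (-1 : K2) * hwz3

include h1 h2 in
lemma iota_DD (g : ℤ) : ι (DD g) = z1 ^ (6 - 6 * g) * wz ^ (6 * g - 6) * DD g := by
  rw [DD, map_zpow₀, map_mul, iota_Δ1 ι h1 h2, iota_Δ2 ι h2]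
  rw [show (432 : K2) ^ 3 * z1 ^ 3 * Δ2 * (Δ1 * (((432 : K2) * wz) ^ 3)⁻¹) =
      (z1 * wz⁻¹) ^ (3:ℕ) * (Δ1 * Δ2) from by field_simp]
  rw [mul_zpow, ← zpow_natCast (z1 * wz⁻¹) 3, ← zpow_mul, mul_zpow, inv_zpow, ← zpow_neg,
    show ((3:ℕ) : ℤ) * (-(2 * g - 2)) = 6 - 6 * g from by push_cast; ring, ← DD]
  congr 2
  ring

include h1 h2 in
lemma iota_mono (a b : ℤ) (n : ℕ) (g : ℤ) :
    ι (z1 ^ a * wz ^ b * z2 ^ n * DD g) =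
      (-1 : K2) ^ n * (z1 ^ (b + (3 * (n : ℤ) - 6 * g + 6)) *
        wz ^ (a - (3 * (n : ℤ) - 6 * g + 6)) * z2 ^ n * DD g) := by
  have hne : (-(z1 ^ (3:ℕ) * z2) * (wz ^ (3:ℕ))⁻¹) ^ n =
      (-1 : K2) ^ n * (z1 ^ (3 * (n : ℤ)) * wz ^ (-(3 * (n : ℤ))) * z2 ^ n) := by
    rw [show -(z1 ^ (3:ℕ) * z2) * (wz ^ (3:ℕ))⁻¹ =
        (-1) * (z1 ^ (3:ℕ) * ((wz ^ (3:ℕ))⁻¹ * z2)) from by ring,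
      mul_pow, mul_pow, mul_pow, inv_pow, ← pow_mul z1, ← pow_mul wz,
      ← zpow_natCast z1 (3 * n), ← zpow_natCast wz (3 * n), ← zpow_neg]
    push_cast
    ring
  rw [map_mul, map_mul, map_mul, map_zpow₀, map_zpow₀, map_pow,
    iota_z1 ι h1, iota_wz ι h1, iota_z2' ι h2, iota_DD ι h1 h2, hne]
  rw [show b + (3 * (n : ℤ) - 6 * g + 6) = b + 3 * (n : ℤ) + (6 - 6 * g) from by ring,
    show a - (3 * (n : ℤ) - 6 * g + 6) = a + -(3 * (n : ℤ)) + (6 * g - 6) from by ring,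
    zpow_add₀ z1_ne, zpow_add₀ z1_ne, zpow_add₀ wz_ne, zpow_add₀ wz_ne]
  ring

end iota

lemma wz_def : (1 : K2) / 432 - z1 = wz := rfl

lemma DD_def (g : ℤ) : (Δ1 * Δ2) ^ (-(2 * g - 2)) = DD g := rfl

lemma EE_natCast (g : ℤ) (m n k : ℕ) (hk : k ≤ m) :
    EE g m n (k : ℤ) = z1 ^ k * wz ^ (m - k) * z2 ^ n * DD g := by
  rw [EE, show (m : ℤ) - (k : ℤ) = ((m - k : ℕ) : ℤ) from by omega, zpow_natCast, zpow_natCast]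

lemma V0_eq (g : ℤ) (m n : ℕ) :
    V0 g m n = Submodule.span ℂ (EE g m n '' Set.Icc (0 : ℤ) (m : ℤ)) := by
  rw [V0]
  congr 1
  ext f
  constructor
  · rintro ⟨k, hk, rfl⟩
    exact ⟨(k : ℤ), ⟨by positivity, by exact_mod_cast hk⟩, by
      rw [EE_natCast g m n k hk, wz_def, DD_def]⟩
  · rintro ⟨j, ⟨hj0, hjm⟩, rfl⟩
    obtain ⟨k, rfl⟩ : ∃ k : ℕ, j = (k : ℤ) := ⟨j.toNat, by omega⟩
    refine ⟨k, by omega, ?_⟩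
    rw [EE_natCast g m n k (by omega), wz_def, DD_def]

lemma mono_mem_V0 (g : ℤ) (m n k₁ k₂ : ℕ) (h : k₁ + k₂ ≤ m) :
    z1 ^ k₁ * wz ^ k₂ * z2 ^ n * DD g ∈ V0 g m n := by
  set M := m - (k₁ + k₂) with hM
  have h1 : ((432 : K2) * (z1 + wz)) ^ M = 1 := by
    rw [z1_wz]
    norm_num
  have hexp : ((432 : K2) * (z1 + wz)) ^ M =
      ∑ i ∈ Finset.range (M + 1), (432 : K2) ^ M * (M.choose i : K2) * (z1 ^ i * wz ^ (M - i)) := by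
    rw [mul_pow, add_pow, Finset.mul_sum]
    exact Finset.sum_congr rfl fun i _ => by ring
  have key : z1 ^ k₁ * wz ^ k₂ * z2 ^ n * DD g =
      ∑ i ∈ Finset.range (M + 1), ((432 : ℂ) ^ M * (M.choose i : ℂ)) •
        (z1 ^ (k₁ + i) * wz ^ (m - (k₁ + i)) * z2 ^ n * DD g) := by
    calc z1 ^ k₁ * wz ^ k₂ * z2 ^ n * DD g
        = (z1 ^ k₁ * wz ^ k₂ * z2 ^ n * DD g) * (((432 : K2) * (z1 + wz)) ^ M) := by
          rw [h1, mul_one]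
      _ = ∑ i ∈ Finset.range (M + 1), ((432 : ℂ) ^ M * (M.choose i : ℂ)) •
            (z1 ^ (k₁ + i) * wz ^ (m - (k₁ + i)) * z2 ^ n * DD g) := by
          rw [hexp, Finset.mul_sum]
          refine Finset.sum_congr rfl fun i hi => ?_
          rw [Finset.mem_range] at hi
          simp only [Algebra.smul_def (R := ℂ) (A := K2), map_mul, map_pow, map_ofNat, map_natCast]
          rw [show m - (k₁ + i) = k₂ + (M - i) from by omega, pow_add z1, pow_add wz]
          ring
  rw [key]
  refine Submodule.sum_mem _ fun i hi => Submodule.smul_mem _ _ (Submodule.subset_span ?_)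
  rw [Finset.mem_range] at hi
  exact ⟨k₁ + i, by omega, by rw [wz_def, DD_def]⟩

lemma q_mem : ∀ d : ℕ, z1 ^ d + wz ^ d ∈
    Submodule.span ℂ {x : K2 | ∃ i : ℕ, 2 * i ≤ d ∧ x = (z1 * wz) ^ i}
  | 0 => by
    have h : z1 ^ 0 + wz ^ 0 = (2 : ℂ) • (z1 * wz) ^ 0 := by
      simp only [Algebra.smul_def (R := ℂ) (A := K2), map_ofNat, pow_zero]
      norm_num
    rw [h]
    exact Submodule.smul_mem _ _ (Submodule.subset_span ⟨0, by norm_num, rfl⟩)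
  | 1 => by
    have h : z1 ^ 1 + wz ^ 1 = ((1 : ℂ) / 432) • (z1 * wz) ^ 0 := by
      simp only [Algebra.smul_def (R := ℂ) (A := K2), map_div₀, map_one, map_ofNat, pow_zero,
        pow_one, mul_one]
      exact z1_wz
    rw [h]
    exact Submodule.smul_mem _ _ (Submodule.subset_span ⟨0, by norm_num, rfl⟩)
  | (d + 2) => by
    have hrec : z1 ^ (d + 2) + wz ^ (d + 2) =
        ((1 : ℂ) / 432) • (z1 ^ (d + 1) + wz ^ (d + 1)) - (z1 * wz) * (z1 ^ d + wz ^ d) := by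
      simp only [Algebra.smul_def (R := ℂ) (A := K2), map_div₀, map_one, map_ofNat]
      linear_combination (-(z1 ^ (d + 1)) - wz ^ (d + 1)) * z1_wz.symm
    rw [hrec]
    refine sub_mem (Submodule.smul_mem _ _ (Submodule.span_mono ?_ (q_mem (d + 1)))) ?_
    · rintro x ⟨i, hi, rfl⟩; exact ⟨i, by omega, rfl⟩
    · have h2 := Submodule.mem_map_of_mem (f := LinearMap.mulLeft ℂ (z1 * wz)) (q_mem d)
      rw [Submodule.map_span] at h2
      refine Submodule.span_mono ?_ h2
      rintro x ⟨y, ⟨i, hi, rfl⟩, rfl⟩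
      exact ⟨i + 1, by omega, by simp only [LinearMap.mulLeft_apply]; ring⟩

lemma r_mem : ∀ d : ℕ, z1 ^ d - wz ^ d ∈
    Submodule.span ℂ {x : K2 | ∃ i : ℕ, 2 * i + 1 ≤ d ∧ x = (1 / 432 - 2 * z1) * (z1 * wz) ^ i}
  | 0 => by
    rw [show z1 ^ 0 - wz ^ 0 = 0 from by norm_num]
    exact Submodule.zero_mem _
  | 1 => by
    have h : z1 ^ 1 - wz ^ 1 = (-1 : ℂ) • ((1 / 432 - 2 * z1) * (z1 * wz) ^ 0) := by
      simp only [Algebra.smul_def (R := ℂ) (A := K2), map_neg, map_one, pow_zero, mul_one,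
        pow_one]
      rw [wz]
      ring
    rw [h]
    exact Submodule.smul_mem _ _ (Submodule.subset_span ⟨0, by norm_num, rfl⟩)
  | (d + 2) => by
    have hrec : z1 ^ (d + 2) - wz ^ (d + 2) =
        ((1 : ℂ) / 432) • (z1 ^ (d + 1) - wz ^ (d + 1)) - (z1 * wz) * (z1 ^ d - wz ^ d) := by
      simp only [Algebra.smul_def (R := ℂ) (A := K2), map_div₀, map_one, map_ofNat]
      linear_combination (wz ^ (d + 1) - z1 ^ (d + 1)) * z1_wz.symm
    rw [hrec]
    refine sub_mem (Submodule.smul_mem _ _ (Submodule.span_mono ?_ (r_mem (d + 1)))) ?_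
    · rintro x ⟨i, hi, rfl⟩; exact ⟨i, by omega, rfl⟩
    · have h2 := Submodule.mem_map_of_mem (f := LinearMap.mulLeft ℂ (z1 * wz)) (r_mem d)
      rw [Submodule.map_span] at h2
      refine Submodule.span_mono ?_ h2
      rintro x ⟨y, ⟨i, hi, rfl⟩, rfl⟩
      exact ⟨i + 1, by omega, by simp only [LinearMap.mulLeft_apply]; ring⟩

lemma EE_split (g : ℤ) (m n : ℕ) (j j' : ℤ) (h0 : 0 ≤ j') (hjj : j' ≤ j) (hm : j ≤ (m : ℤ)) :
    ∀ op : K2 → K2 → K2, (op = (· + ·) ∨ op = (· - ·)) →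
    op (EE g m n j) (EE g m n j') =
      (z1 ^ j'.toNat * wz ^ ((m : ℤ) - j).toNat * z2 ^ n * DD g) *
        (op (z1 ^ (j - j').toNat) (wz ^ (j - j').toNat)) := by
  intro op hop
  set a := j'.toNat with ha
  set b := ((m : ℤ) - j).toNat with hb
  set d := (j - j').toNat with hd
  have E1 : EE g m n j = z1 ^ (a + d) * wz ^ b * z2 ^ n * DD g := by
    rw [EE, show j = ((a + d : ℕ) : ℤ) from by push_cast; omega,
      show (m : ℤ) - ((a + d : ℕ) : ℤ) = ((b : ℕ) : ℤ) from by push_cast; omega,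
      zpow_natCast, zpow_natCast]
  have E2 : EE g m n j' = z1 ^ a * wz ^ (b + d) * z2 ^ n * DD g := by
    rw [EE, show j' = ((a : ℕ) : ℤ) from by push_cast; omega,
      show (m : ℤ) - ((a : ℕ) : ℤ) = ((b + d : ℕ) : ℤ) from by push_cast; omega,
      zpow_natCast, zpow_natCast]
  rcases hop with rfl | rfl
  · simp only
    rw [E1, E2, pow_add, pow_add]
    ring
  · simp only
    rw [E1, E2, pow_add, pow_add]
    ring

lemma pair_plus (g : ℤ) (m n : ℕ) (j j' : ℤ) (h0 : 0 ≤ j') (hjj : j' ≤ j) (hm : j ≤ (m : ℤ))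
    (hsum : j + j' = (m : ℤ) + (3 * (n : ℤ) - 6 * g + 6)) :
    EE g m n j + EE g m n j' ∈ Vplus g m n := by
  have key := EE_split g m n j j' h0 hjj hm (· + ·) (Or.inl rfl)
  rw [key]
  have h2 := Submodule.mem_map_of_mem
    (f := LinearMap.mulLeft ℂ (z1 ^ j'.toNat * wz ^ ((m : ℤ) - j).toNat * z2 ^ n * DD g))
    (q_mem (j - j').toNat)
  rw [Submodule.map_span] at h2
  refine Submodule.span_le.2 ?_ h2
  rintro x ⟨y, ⟨i, hi, rfl⟩, rfl⟩
  have hd : ((j - j').toNat : ℤ) = j - j' := Int.toNat_of_nonneg (by omega)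
  have ha : ((j'.toNat : ℕ) : ℤ) = j' := Int.toNat_of_nonneg h0
  have hbb : ((((m : ℤ) - j).toNat : ℕ) : ℤ) = (m : ℤ) - j := Int.toNat_of_nonneg (by omega)
  refine Submodule.subset_span ⟨j'.toNat + i, ((m : ℤ) - j).toNat + i, ?_, ?_, ?_⟩
  · omega
  · push_cast [ha, hbb]
    omega
  · simp only [LinearMap.mulLeft_apply]
    rw [wz_def, DD_def, pow_add, pow_add]
    ring

lemma pair_minus (g : ℤ) (m n : ℕ) (j j' : ℤ) (h0 : 0 ≤ j') (hjj : j' ≤ j) (hm : j ≤ (m : ℤ))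
    (hsum : j + j' = (m : ℤ) + (3 * (n : ℤ) - 6 * g + 6)) :
    EE g m n j - EE g m n j' ∈ Vminus g m n := by
  have key := EE_split g m n j j' h0 hjj hm (· - ·) (Or.inr rfl)
  rw [key]
  have h2 := Submodule.mem_map_of_mem
    (f := LinearMap.mulLeft ℂ (z1 ^ j'.toNat * wz ^ ((m : ℤ) - j).toNat * z2 ^ n * DD g))
    (r_mem (j - j').toNat)
  rw [Submodule.map_span] at h2
  refine Submodule.span_le.2 ?_ h2
  rintro x ⟨y, ⟨i, hi, rfl⟩, rfl⟩
  have hd : ((j - j').toNat : ℤ) = j - j' := Int.toNat_of_nonneg (by omega)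
  have ha : ((j'.toNat : ℕ) : ℤ) = j' := Int.toNat_of_nonneg h0
  have hbb : ((((m : ℤ) - j).toNat : ℕ) : ℤ) = (m : ℤ) - j := Int.toNat_of_nonneg (by omega)
  refine Submodule.subset_span ⟨j'.toNat + i, ((m : ℤ) - j).toNat + i, ?_, ?_, ?_⟩
  · omega
  · push_cast [ha, hbb]
    omega
  · simp only [LinearMap.mulLeft_apply]
    rw [wz_def, DD_def, pow_add, pow_add]
    ring

lemma eps_odd (g : ℤ) (n : ℕ) (h : Odd ((n : ℤ) + g)) :
    (-1 : ℂ) ^ (g - 1) = (-1 : ℂ) ^ (n : ℕ) := by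
  rw [← zpow_natCast (-1 : ℂ) n, show g - 1 = (g - 1 - n) + (n : ℤ) from by ring,
    zpow_add₀ (by norm_num : (-1 : ℂ) ≠ 0)]
  have hev : Even (g - 1 - (n : ℤ)) := by
    obtain ⟨k, hk⟩ := h
    exact ⟨k - n, by omega⟩
  rw [hev.neg_one_zpow, one_mul]

lemma eps_even (g : ℤ) (n : ℕ) (h : Even ((n : ℤ) + g)) :
    (-1 : ℂ) ^ (g - 1) = -(-1 : ℂ) ^ (n : ℕ) := by
  rw [← zpow_natCast (-1 : ℂ) n, show g - 1 = (g - 1 - n) + (n : ℤ) from by ring,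
    zpow_add₀ (by norm_num : (-1 : ℂ) ≠ 0)]
  have hodd : Odd (g - 1 - (n : ℤ)) := by
    obtain ⟨k, hk⟩ := h
    exact ⟨k - n - 1, by omega⟩
  rw [hodd.neg_one_zpow, neg_one_mul]

lemma wz_sub : (1 : K2) / 432 - 2 * z1 = wz - z1 := by rw [wz]; ring

section incl
variable (ι : K2 →ₐ[ℂ] K2)
    (h1 : ι z1 = 1 / 432 - z1)
    (h2 : ι z2 = -((432 * z1) ^ 3 * z2) / (1 - 432 * z1) ^ 3)

include h1 h2 in
lemma Vplus_le_V2 (g : ℤ) (m n : ℕ) (hodd : Odd ((n : ℤ) + g)) :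
    Vplus g m n ≤ V2 ι g m n := by
  rw [Vplus]
  refine Submodule.span_le.2 ?_
  rintro x ⟨k₁, k₂, hle, hdiff, rfl⟩
  rw [wz_def, DD_def]
  have hx0 : z1 ^ k₁ * wz ^ k₂ * z2 ^ n * DD g ∈ V0 g m n := mono_mem_V0 g m n k₁ k₂ hle
  have hiota : ι (z1 ^ k₁ * wz ^ k₂ * z2 ^ n * DD g) =
      ((-1 : ℂ) ^ (n : ℕ)) • (z1 ^ k₁ * wz ^ k₂ * z2 ^ n * DD g) := by
    have hmono := iota_mono ι h1 h2 (k₁ : ℤ) (k₂ : ℤ) n g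
    rw [show (k₂ : ℤ) + (3 * (n : ℤ) - 6 * g + 6) = (k₁ : ℤ) from by omega,
      show (k₁ : ℤ) - (3 * (n : ℤ) - 6 * g + 6) = (k₂ : ℤ) from by omega,
      zpow_natCast, zpow_natCast] at hmono
    rw [hmono, smulC, map_pow, map_neg, map_one]
  refine Submodule.mem_inf.2 ⟨Submodule.mem_inf.2 ⟨hx0, ?_⟩, ?_⟩
  · show _ ∈ (V0 g m n).comap ι.toLinearMap
    rw [Submodule.mem_comap, AlgHom.toLinearMap_apply, hiota]
    exact Submodule.smul_mem _ _ hx0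
  · rw [LinearMap.mem_ker, LinearMap.sub_apply, LinearMap.smul_apply, LinearMap.id_apply,
      AlgHom.toLinearMap_apply, sub_eq_zero, hiota, eps_odd g n hodd]

include h1 h2 in
lemma Vminus_le_V2 (g : ℤ) (m n : ℕ) (heven : Even ((n : ℤ) + g)) :
    Vminus g m n ≤ V2 ι g m n := by
  rw [Vminus]
  refine Submodule.span_le.2 ?_
  rintro x ⟨k₁, k₂, hle, hdiff, rfl⟩
  rw [wz_def, DD_def, wz_sub]
  have hsplit : (wz - z1) * z1 ^ k₁ * wz ^ k₂ * z2 ^ n * DD g =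
      z1 ^ k₁ * wz ^ (k₂ + 1) * z2 ^ n * DD g - z1 ^ (k₁ + 1) * wz ^ k₂ * z2 ^ n * DD g := by
    rw [pow_succ, pow_succ]
    ring
  rw [hsplit]
  have hx0 : z1 ^ k₁ * wz ^ (k₂ + 1) * z2 ^ n * DD g -
      z1 ^ (k₁ + 1) * wz ^ k₂ * z2 ^ n * DD g ∈ V0 g m n :=
    sub_mem (mono_mem_V0 g m n k₁ (k₂ + 1) (by omega)) (mono_mem_V0 g m n (k₁ + 1) k₂ (by omega))
  have hiota : ι (z1 ^ k₁ * wz ^ (k₂ + 1) * z2 ^ n * DD g -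
      z1 ^ (k₁ + 1) * wz ^ k₂ * z2 ^ n * DD g) =
      (-(-1 : ℂ) ^ (n : ℕ)) • (z1 ^ k₁ * wz ^ (k₂ + 1) * z2 ^ n * DD g -
        z1 ^ (k₁ + 1) * wz ^ k₂ * z2 ^ n * DD g) := by
    have hm1 := iota_mono ι h1 h2 (k₁ : ℤ) ((k₂ : ℤ) + 1) n g
    rw [show (k₂ : ℤ) + 1 + (3 * (n : ℤ) - 6 * g + 6) = ((k₁ + 1 : ℕ) : ℤ) from by push_cast; omega,
      show (k₁ : ℤ) - (3 * (n : ℤ) - 6 * g + 6) = (k₂ : ℤ) from by omega,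
      show (k₂ : ℤ) + 1 = ((k₂ + 1 : ℕ) : ℤ) from by push_cast; ring,
      zpow_natCast, zpow_natCast, zpow_natCast, zpow_natCast] at hm1
    have hm2 := iota_mono ι h1 h2 ((k₁ : ℤ) + 1) (k₂ : ℤ) n g
    rw [show (k₂ : ℤ) + (3 * (n : ℤ) - 6 * g + 6) = (k₁ : ℤ) from by omega,
      show (k₁ : ℤ) + 1 - (3 * (n : ℤ) - 6 * g + 6) = ((k₂ + 1 : ℕ) : ℤ) from by push_cast; omega,
      show (k₁ : ℤ) + 1 = ((k₁ + 1 : ℕ) : ℤ) from by push_cast; ring,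
      zpow_natCast, zpow_natCast, zpow_natCast, zpow_natCast] at hm2
    rw [map_sub, hm1, hm2, smulC, map_neg, map_pow, map_neg, map_one]
    ring
  refine Submodule.mem_inf.2 ⟨Submodule.mem_inf.2 ⟨hx0, ?_⟩, ?_⟩
  · show _ ∈ (V0 g m n).comap ι.toLinearMap
    rw [Submodule.mem_comap, AlgHom.toLinearMap_apply, hiota]
    exact Submodule.smul_mem _ _ hx0
  · rw [LinearMap.mem_ker, LinearMap.sub_apply, LinearMap.smul_apply, LinearMap.id_apply,
      AlgHom.toLinearMap_apply, sub_eq_zero, hiota, eps_even g n heven]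

end incl

lemma smul_sumK {α : Type*} (a : ℂ) (s : Finset α) (f : α → K2) :
    a • ∑ i ∈ s, f i = ∑ i ∈ s, a • f i := by
  rw [smulC, Finset.mul_sum]
  exact Finset.sum_congr rfl fun i _ => (smulC a (f i)).symm

lemma V2_le_master (ι : K2 →ₐ[ℂ] K2)
    (h1 : ι z1 = 1 / 432 - z1)
    (h2 : ι z2 = -((432 * z1) ^ 3 * z2) / (1 - 432 * z1) ^ 3)
    (g : ℤ) (m n : ℕ) (δ : ℂ) (hδ2 : δ * δ = 1)
    (heps : (-1 : ℂ) ^ (g - 1) * δ = (-1 : ℂ) ^ (n : ℕ))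
    (W : Submodule ℂ K2)
    (hpair : ∀ j j' : ℤ, 0 ≤ j → j ≤ (m : ℤ) → 0 ≤ j' → j' ≤ (m : ℤ) →
      j + j' = (m : ℤ) + (3 * (n : ℤ) - 6 * g + 6) →
      EE g m n j + δ • EE g m n j' ∈ W) :
    V2 ι g m n ≤ W := by
  intro f hf
  obtain ⟨⟨hf0, -⟩, hker⟩ := hf
  have hδ0 : δ ≠ 0 := fun h => by simp [h] at hδ2
  have hι : ι f = ((-1 : ℂ) ^ (g - 1)) • f := by
    have h := hker
    simp only [SetLike.mem_coe, LinearMap.mem_ker, LinearMap.sub_apply, LinearMap.smul_apply,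
      LinearMap.id_apply, sub_eq_zero, AlgHom.toLinearMap_apply] at h
    exact h
  rw [V0_eq] at hf0
  obtain ⟨l, hlsupp, hrepr⟩ := (Finsupp.mem_span_image_iff_linearCombination ℂ).1 hf0
  set σ : ℤ ≃ ℤ := Function.Involutive.toPerm
      (fun j => (m : ℤ) + (3 * (n : ℤ) - 6 * g + 6) - j)
      (fun j => by dsimp only; ring) with hσdef
  have hσ_apply : ∀ j, σ j = (m : ℤ) + (3 * (n : ℤ) - 6 * g + 6) - j := fun j => rfl
  have hσσ : ∀ j, σ (σ j) = j := fun j => by rw [hσ_apply, hσ_apply]; ring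
  have hiotaEE : ∀ j : ℤ, ι (EE g m n j) = ((-1 : ℂ) ^ (n : ℕ)) • EE g m n (σ j) := by
    intro j
    have e1 : (m : ℤ) - j + (3 * (n : ℤ) - 6 * g + 6) = σ j := by rw [hσ_apply]; ring
    have e2 : j - (3 * (n : ℤ) - 6 * g + 6) = (m : ℤ) - σ j := by rw [hσ_apply]; ring
    rw [show EE g m n j = z1 ^ j * wz ^ ((m : ℤ) - j) * z2 ^ n * DD g from rfl,
      iota_mono ι h1 h2 j ((m : ℤ) - j) n g, e1, e2,
      show z1 ^ (σ j) * wz ^ ((m : ℤ) - σ j) * z2 ^ n * DD g = EE g m n (σ j) from rfl,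
      smulC, map_pow, map_neg, map_one]
  have hcomb : ((-1 : ℂ) ^ (n : ℕ)) • Finsupp.linearCombination ℂ (EE g m n ∘ σ) l =
      ((-1 : ℂ) ^ (g - 1)) • f := by
    rw [← hι, ← hrepr, Finsupp.linearCombination_apply, Finsupp.linearCombination_apply,
      Finsupp.sum, Finsupp.sum, map_sum, smul_sumK]
    refine Finset.sum_congr rfl fun j hj => ?_
    calc ((-1 : ℂ) ^ (n : ℕ)) • (l j • (EE g m n ∘ σ) j)
        = l j • (((-1 : ℂ) ^ (n : ℕ)) • EE g m n (σ j)) := by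
          rw [smul_smul, smul_smul, mul_comm]
          rfl
      _ = l j • ι (EE g m n j) := by rw [hiotaEE j]
      _ = ι (l j • EE g m n j) := by
          rw [show ι (l j • EE g m n j) = ι.toLinearMap (l j • EE g m n j) from rfl,
            map_smul, AlgHom.toLinearMap_apply]
  have key : Finsupp.mapDomain σ (((-1 : ℂ) ^ (n : ℕ)) • l) = ((-1 : ℂ) ^ (g - 1)) • l := by
    have inj := linearIndependent_iff_injective_finsuppLinearCombination.1 (linIndep_EE g m n)
    apply inj
    rw [Finsupp.linearCombination_mapDomain, map_smul, map_smul, hrepr]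
    exact hcomb
  have hε0 : ((-1 : ℂ) ^ (g - 1)) ≠ 0 := zpow_ne_zero _ (by norm_num)
  have hrel : ∀ j : ℤ, l (σ j) = δ * l j := by
    intro j
    have h := congrArg (fun u : ℤ →₀ ℂ => u (σ j)) key
    simp only [Finsupp.smul_apply, smul_eq_mul] at h
    rw [Finsupp.mapDomain_apply σ.injective] at h
    refine mul_left_cancel₀ hε0 ?_
    rw [← mul_assoc, heps]
    exact h.symm
  have hσsupp : ∀ j ∈ l.support, σ j ∈ l.support := by
    intro j hj
    rw [Finsupp.mem_support_iff] at *
    rw [hrel j]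
    exact mul_ne_zero hδ0 hj
  have hf_sum : f = ∑ j ∈ l.support, l j • EE g m n j := by
    rw [← hrepr, Finsupp.linearCombination_apply, Finsupp.sum]
  have hT : ∑ j ∈ l.support, l j • EE g m n (σ j) = δ • f := by
    have hstep : ∀ j ∈ l.support, l j • EE g m n (σ j) = δ • (l (σ j) • EE g m n (σ j)) := by
      intro j hj
      rw [hrel j, smul_smul, ← mul_assoc, hδ2, one_mul]
    rw [Finset.sum_congr rfl hstep, ← smul_sumK]
    congr 1
    rw [hf_sum]
    refine Finset.sum_equiv σ (fun j => ⟨fun hj => hσsupp j hj, fun hj => ?_⟩) (fun j _ => rfl)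
    have h3 := hσsupp (σ j) hj
    rwa [hσσ j] at h3
  have h2f : f = (2⁻¹ : ℂ) • ∑ j ∈ l.support, l j • (EE g m n j + δ • EE g m n (σ j)) := by
    have hsplit : ∑ j ∈ l.support, l j • (EE g m n j + δ • EE g m n (σ j)) =
        (∑ j ∈ l.support, l j • EE g m n j) + δ • ∑ j ∈ l.support, l j • EE g m n (σ j) := by
      rw [smul_sumK, ← Finset.sum_add_distrib]
      refine Finset.sum_congr rfl fun j _ => ?_
      rw [smul_add]
      congr 1
      rw [smul_smul, smul_smul, mul_comm]
    rw [hsplit, hT, ← hf_sum, smul_smul, hδ2, one_smul, ← two_smul ℂ f, smul_smul]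
    norm_num
  rw [h2f]
  refine Submodule.smul_mem _ _ (Submodule.sum_mem _ fun j hj => Submodule.smul_mem _ _ ?_)
  have hjI : j ∈ Set.Icc (0 : ℤ) (m : ℤ) := (Finsupp.mem_supported ℂ l).1 hlsupp hj
  have hsI : σ j ∈ Set.Icc (0 : ℤ) (m : ℤ) := (Finsupp.mem_supported ℂ l).1 hlsupp (hσsupp j hj)
  exact hpair j (σ j) hjI.1 hjI.2 hsI.1 hsI.2 (by rw [hσ_apply]; ring)

/-- The eigenspace `V₂^{(g,m,n)}` equals `V₊^{(g,m,n)}` when `n + g` is odd and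
equals `V₋^{(g,m,n)}` when `n + g` is even. -/
theorem V2_eq_Vplus_or_Vminus (ι : K2 →ₐ[ℂ] K2)
    (h1 : ι z1 = 1 / 432 - z1)
    (h2 : ι z2 = -((432 * z1) ^ 3 * z2) / (1 - 432 * z1) ^ 3)
    (g : ℤ) (hg : 1 ≤ g) (m n : ℕ) :
    (Odd ((n : ℤ) + g) → V2 ι g m n = Vplus g m n) ∧
    (Even ((n : ℤ) + g) → V2 ι g m n = Vminus g m n) := by
  constructor
  · intro hodd
    refine le_antisymm ?_ (Vplus_le_V2 ι h1 h2 g m n hodd)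
    refine V2_le_master ι h1 h2 g m n 1 (by norm_num)
      (by rw [mul_one]; exact eps_odd g n hodd) (Vplus g m n) ?_
    intro j j' hj0 hjm hj'0 hj'm hsum
    rw [one_smul]
    rcases le_total j' j with h | h
    · exact pair_plus g m n j j' hj'0 h hjm hsum
    · rw [add_comm]
      exact pair_plus g m n j' j hj0 h hj'm (by omega)
  · intro heven
    refine le_antisymm ?_ (Vminus_le_V2 ι h1 h2 g m n heven)
    refine V2_le_master ι h1 h2 g m n (-1) (by norm_num)
      (by rw [mul_neg_one, eps_even g n heven, neg_neg]) (Vminus g m n) ?_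
    intro j j' hj0 hjm hj'0 hj'm hsum
    rw [show EE g m n j + (-1 : ℂ) • EE g m n j' = EE g m n j - EE g m n j' from by
      rw [smulC, map_neg, map_one]; ring]
    rcases le_total j' j with h | h
    · exact pair_minus g m n j j' hj'0 h hjm hsum
    · rw [show EE g m n j - EE g m n j' = -(EE g m n j' - EE g m n j) from by ring]
      exact Submodule.neg_mem _ (pair_minus g m n j' j hj0 h hj'm (by omega))

end
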